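/- arXiv:1706.07395 — 7 statements merged into one kernel-verified Lean document; each statement's English description precedes it below -/
import Mathlib

section
/- Let T > 0 and ρ > 0 with ρT not an integer multiple of 2π. Then for every t ∈ [0,T], ∫₀ᵀ G_P⁺(t,s) ds = ∫₀ᵀ G_P⁺(0,s) ds and ∫₀ᵀ G_P⁻(t,s) ds = ∫₀ᵀ G_P⁻(0,s) ds; in particular, the ratio (∫₀ᵀ G_P⁺(t,s) ds)/(∫₀ᵀ G_P⁻(t,s) ds) is the same for all t ∈ [0,T] whenever the denominator is nonzero. -/
open Real Set intervalIntegral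

/-- The Green's function of the periodic problem `u'' + ρ²u = 0`,
`u(0) = u(T)`, `u'(0) = u'(T)`. -/
noncomputable def GreenP (T ρ t s : ℝ) : ℝ :=
  if s ≤ t then (sin (ρ * (t - s)) + sin (ρ * (T - t + s))) / (2 * ρ * (1 - cos (ρ * T)))
  else (sin (ρ * (s - t)) + sin (ρ * (T - s + t))) / (2 * ρ * (1 - cos (ρ * T)))

/-- Positive part of the periodic Green's function. -/
noncomputable def GreenPpos (T ρ t s : ℝ) : ℝ := max (GreenP T ρ t s) 0

/-- Negative part of the periodic Green's function. -/
noncomputable def GreenPneg (T ρ t s : ℝ) : ℝ := max (-(GreenP T ρ t s)) 0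

/-- Periodic extension kernel. -/
noncomputable def Kf (T ρ x : ℝ) : ℝ :=
  (sin (ρ * (T * Int.fract (x / T))) + sin (ρ * (T - T * Int.fract (x / T)))) /
    (2 * ρ * (1 - cos (ρ * T)))

lemma Kf_periodic (T ρ : ℝ) (hT : T ≠ 0) : Function.Periodic (Kf T ρ) T := by
  intro x
  have h : (x + T) / T = x / T + (1 : ℤ) := by
    push_cast; field_simp
  simp [Kf, h, Int.fract_add_intCast]

lemma GreenP_eq_Kf (T ρ : ℝ) (hT : 0 < T) {t s : ℝ} (ht : t ∈ Icc 0 T) (hs : s ∈ Icc 0 T) :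
    GreenP T ρ t s = Kf T ρ (t - s) := by
  obtain ⟨ht0, htT⟩ := ht
  obtain ⟨hs0, hsT⟩ := hs
  unfold GreenP Kf
  by_cases h : s ≤ t
  · rw [if_pos h]
    rcases lt_or_eq_of_le (show t - s ≤ T by linarith) with hlt | heq
    · have hfr : Int.fract ((t - s) / T) = (t - s) / T := by
        rw [Int.fract_eq_self]
        constructor
        · exact div_nonneg (by linarith) hT.le
        · rw [div_lt_one hT]; exact hlt
      rw [hfr]
      rw [mul_div_cancel₀ _ (ne_of_gt hT)]
      ring_nf
    · have h1 : (t - s) / T = 1 := by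
        rw [div_eq_one_iff_eq (ne_of_gt hT)]; linarith
      rw [h1, Int.fract_one, mul_zero]
      rw [show T - t + s = 0 by linarith, show t - s = T by linarith]
      simp [add_comm]
  · rw [if_neg h]
    push_neg at h
    have hfr : Int.fract ((t - s) / T) = (t - s) / T + 1 := by
      have hx : Int.fract ((t - s) / T + 1 + ((-1 : ℤ) : ℝ)) = Int.fract ((t - s) / T + 1) :=
        Int.fract_add_intCast _ _
      rw [show (t - s) / T + 1 + ((-1 : ℤ) : ℝ) = (t - s) / T by push_cast; ring] at hx
      rw [hx, Int.fract_eq_self]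
      constructor
      · have : (-1 : ℝ) ≤ (t - s) / T := by
          rw [le_div_iff₀ hT]; linarith
        linarith
      · have : (t - s) / T < 0 := div_neg_of_neg_of_pos (by linarith) hT
        linarith
    rw [hfr]
    have hTm : T * ((t - s) / T + 1) = t - s + T := by field_simp
    rw [hTm]
    ring_nf

lemma periodic_shift_integral (T : ℝ) (g : ℝ → ℝ) (hg : Function.Periodic g T) (t : ℝ) :
    (∫ s in (0 : ℝ)..T, g (t - s)) = ∫ x in (-T)..(0 : ℝ), g x := by
  rw [intervalIntegral.integral_comp_sub_left g t]
  have h1 : t - 0 = (t - T) + T := by ring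
  have h2 : (0 : ℝ) = -T + T := by ring
  rw [h1]
  rw [show (-T : ℝ) = -T from rfl]
  have := hg.intervalIntegral_add_eq (t - T) (-T)
  rw [this, neg_add_cancel]

theorem periodic_green_parts_integral_const (T ρ : ℝ) (hT : 0 < T) (hρ : 0 < ρ)
    (hres : ∀ n : ℤ, ρ * T ≠ 2 * n * π) :
    (∀ t ∈ Icc 0 T,
      (∫ s in (0 : ℝ)..T, GreenPpos T ρ t s) = ∫ s in (0 : ℝ)..T, GreenPpos T ρ 0 s) ∧
    (∀ t ∈ Icc 0 T,
      (∫ s in (0 : ℝ)..T, GreenPneg T ρ t s) = ∫ s in (0 : ℝ)..T, GreenPneg T ρ 0 s) ∧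
    (∀ t₁ ∈ Icc 0 T, ∀ t₂ ∈ Icc 0 T,
      (∫ s in (0 : ℝ)..T, GreenPneg T ρ t₁ s) ≠ 0 →
      (∫ s in (0 : ℝ)..T, GreenPneg T ρ t₂ s) ≠ 0 →
      (∫ s in (0 : ℝ)..T, GreenPpos T ρ t₁ s) / (∫ s in (0 : ℝ)..T, GreenPneg T ρ t₁ s) =
      (∫ s in (0 : ℝ)..T, GreenPpos T ρ t₂ s) / (∫ s in (0 : ℝ)..T, GreenPneg T ρ t₂ s)) := by
  have hKp : Function.Periodic (fun x => max (Kf T ρ x) 0) T := fun x => by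
    simp [Kf_periodic T ρ (ne_of_gt hT) x]
  have hKn : Function.Periodic (fun x => max (-(Kf T ρ x)) 0) T := fun x => by
    simp [Kf_periodic T ρ (ne_of_gt hT) x]
  have hpos : ∀ t ∈ Icc (0 : ℝ) T,
      (∫ s in (0 : ℝ)..T, GreenPpos T ρ t s) = ∫ x in (-T)..(0 : ℝ), max (Kf T ρ x) 0 := by
    intro t ht
    have : (∫ s in (0 : ℝ)..T, GreenPpos T ρ t s)
        = ∫ s in (0 : ℝ)..T, max (Kf T ρ (t - s)) 0 := by
      apply intervalIntegral.integral_congr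
      intro s hs
      rw [uIcc_of_le hT.le] at hs
      simp only [GreenPpos, GreenP_eq_Kf T ρ hT ht hs]
    rw [this]
    exact periodic_shift_integral T _ hKp t
  have hneg : ∀ t ∈ Icc (0 : ℝ) T,
      (∫ s in (0 : ℝ)..T, GreenPneg T ρ t s) = ∫ x in (-T)..(0 : ℝ), max (-(Kf T ρ x)) 0 := by
    intro t ht
    have : (∫ s in (0 : ℝ)..T, GreenPneg T ρ t s)
        = ∫ s in (0 : ℝ)..T, max (-(Kf T ρ (t - s))) 0 := by
      apply intervalIntegral.integral_congr
      intro s hs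
      rw [uIcc_of_le hT.le] at hs
      simp only [GreenPneg, GreenP_eq_Kf T ρ hT ht hs]
    rw [this]
    exact periodic_shift_integral T _ hKn t
  have h0 : (0 : ℝ) ∈ Icc (0 : ℝ) T := ⟨le_refl 0, hT.le⟩
  refine ⟨fun t ht => by rw [hpos t ht, hpos 0 h0],
          fun t ht => by rw [hneg t ht, hneg 0 h0],
          fun t₁ ht₁ t₂ ht₂ _ _ => by
            rw [hpos t₁ ht₁, hneg t₁ ht₁, hpos t₂ ht₂, hneg t₂ ht₂]⟩
end

section
/- Let T > 0 and ρ > 0 with ρT not an integer multiple of 2π. Then G_P(t,s) ≥ 0 for all (t,s) ∈ [0,T] × [0,T] if and only if ρT ≤ π. Moreover, if ρT > π (and ρT is not an integer multiple of 2π), then there exist points (t₁,s₁), (t₂,s₂) ∈ [0,T] × [0,T] with G_P(t₁,s₁) > 0 and G_P(t₂,s₂) < 0. -/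
open Real Set

lemma sin_sum_eq (L x : ℝ) : Real.sin x + Real.sin (L - x)
    = 2 * Real.sin (L/2) * Real.cos (x - L/2) := by
  have a := Real.sin_add (L/2) (x - L/2)
  have b := Real.sin_sub (L/2) (x - L/2)
  have e1 : L/2 + (x - L/2) = x := by ring
  have e2 : L/2 - (x - L/2) = L - x := by ring
  rw [e1] at a
  rw [e2] at b
  rw [a, b]
  ring

theorem periodic_green_sign (T ρ : ℝ) (hT : 0 < T) (hρ : 0 < ρ)
    (hres : ∀ n : ℤ, ρ * T ≠ 2 * n * π) :
    ((∀ t ∈ Icc 0 T, ∀ s ∈ Icc 0 T, 0 ≤ GreenP T ρ t s) ↔ ρ * T ≤ π) ∧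
    (π < ρ * T →
      (∃ t₁ ∈ Icc 0 T, ∃ s₁ ∈ Icc 0 T, 0 < GreenP T ρ t₁ s₁) ∧
      (∃ t₂ ∈ Icc 0 T, ∃ s₂ ∈ Icc 0 T, GreenP T ρ t₂ s₂ < 0)) := by
  have hL0 : 0 < ρ * T := mul_pos hρ hT
  have hcosne : Real.cos (ρ * T) ≠ 1 := by
    intro h
    rcases (Real.cos_eq_one_iff _).1 h with ⟨n, hn⟩
    exact hres n (by rw [← hn]; ring)
  have hcos : Real.cos (ρ * T) < 1 := lt_of_le_of_ne (Real.cos_le_one _) hcosne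
  have hden : 0 < 2 * ρ * (1 - Real.cos (ρ * T)) := by
    apply mul_pos (by linarith) (by linarith)
  have hsin2 : Real.sin (ρ * T / 2) ≠ 0 := by
    intro h
    rcases Real.sin_eq_zero_iff.1 h with ⟨n, hn⟩
    exact hres n (by push_cast at hn ⊢; linarith)
  have hval : ∀ t : ℝ, 0 ≤ t →
      GreenP T ρ t 0 = 2 * Real.sin (ρ*T/2) * Real.cos (ρ*t - ρ*T/2)
        / (2 * ρ * (1 - Real.cos (ρ * T))) := by
    intro t ht
    rw [GreenP, if_pos ht]
    congr 1
    have e1 : ρ * (t - 0) = ρ * t := by ring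
    have e2 : ρ * (T - t + 0) = ρ * T - ρ * t := by ring
    rw [e1, e2, sin_sum_eq (ρ*T) (ρ*t)]
  have hpart : π < ρ * T →
      (∃ t₁ ∈ Icc (0:ℝ) T, ∃ s₁ ∈ Icc (0:ℝ) T, 0 < GreenP T ρ t₁ s₁) ∧
      (∃ t₂ ∈ Icc (0:ℝ) T, ∃ s₂ ∈ Icc (0:ℝ) T, GreenP T ρ t₂ s₂ < 0) := by
    intro hπ
    have hπ0 := Real.pi_pos
    set m := min (ρ*T/2) π with hm
    have hm1 : π/2 < m := lt_min (by linarith) (by linarith)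
    have hm2 : m ≤ π := min_le_right _ _
    have hm3 : m ≤ ρ*T/2 := min_le_left _ _
    have hcosm : Real.cos m < 0 :=
      Real.cos_neg_of_pi_div_two_lt_of_lt hm1 (by linarith)
    have hta_mem : T/2 ∈ Icc (0:ℝ) T := ⟨by linarith, by linarith⟩
    have hs0 : (0:ℝ) ∈ Icc (0:ℝ) T := ⟨le_refl 0, hT.le⟩
    have htb : (ρ*T/2 + m)/ρ ∈ Icc (0:ℝ) T := by
      constructor
      · apply div_nonneg _ hρ.le; linarith
      · rw [div_le_iff₀ hρ]; nlinarith
    have hva : GreenP T ρ (T/2) 0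
        = 2 * Real.sin (ρ*T/2) / (2 * ρ * (1 - Real.cos (ρ * T))) := by
      rw [hval (T/2) (by linarith)]
      have e : ρ*(T/2) - ρ*T/2 = 0 := by ring
      rw [e, Real.cos_zero, mul_one]
    have hvb : GreenP T ρ ((ρ*T/2 + m)/ρ) 0
        = 2 * Real.sin (ρ*T/2) * Real.cos m / (2 * ρ * (1 - Real.cos (ρ * T))) := by
      rw [hval _ htb.1]
      have e : ρ*((ρ*T/2 + m)/ρ) - ρ*T/2 = m := by field_simp; ring
      rw [e]
    rcases lt_or_gt_of_ne hsin2 with hneg | hpos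
    · refine ⟨⟨_, htb, 0, hs0, ?_⟩, ⟨T/2, hta_mem, 0, hs0, ?_⟩⟩
      · rw [hvb]; exact div_pos (by nlinarith) hden
      · rw [hva]; exact div_neg_of_neg_of_pos (by linarith) hden
    · refine ⟨⟨T/2, hta_mem, 0, hs0, ?_⟩, ⟨_, htb, 0, hs0, ?_⟩⟩
      · rw [hva]; exact div_pos (by linarith) hden
      · rw [hvb]; exact div_neg_of_neg_of_pos (by nlinarith) hden
  refine ⟨⟨?_, ?_⟩, hpart⟩
  · intro hall
    by_contra hgt
    push_neg at hgt
    obtain ⟨_, t₂, ht₂, s₂, hs₂, hneg⟩ := hpart hgt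
    exact absurd (hall t₂ ht₂ s₂ hs₂) (not_le.2 hneg)
  · intro hle t ht s hs
    have hπ0 := Real.pi_pos
    have key : ∀ x : ℝ, 0 ≤ x → x ≤ ρ * T →
        0 ≤ Real.sin x + Real.sin (ρ * T - x) := by
      intro x hx0 hxL
      rw [sin_sum_eq]
      have hs2 : 0 < Real.sin (ρ*T/2) :=
        Real.sin_pos_of_pos_of_lt_pi (by linarith) (by linarith)
      have hc : 0 ≤ Real.cos (x - ρ*T/2) :=
        Real.cos_nonneg_of_mem_Icc ⟨by linarith, by linarith⟩
      positivity
    rw [GreenP]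
    obtain ⟨ht0, htT⟩ := ht
    obtain ⟨hs0', hsT⟩ := hs
    split_ifs with h
    · apply div_nonneg _ hden.le
      have e : ρ * (T - t + s) = ρ * T - ρ * (t - s) := by ring
      rw [e]
      exact key (ρ*(t-s)) (mul_nonneg hρ.le (by linarith))
        (by nlinarith)
    · apply div_nonneg _ hden.le
      push_neg at h
      have e : ρ * (T - s + t) = ρ * T - ρ * (s - t) := by ring
      rw [e]
      exact key (ρ*(s-t)) (mul_nonneg hρ.le (by linarith))
        (by nlinarith)
end

section
/- Let T > 0 and ρ > 0 with ρT not an integer multiple of 2π. Then for s ∈ [0,T], G_P(0,s) = 0 if and only if there exists an integer k such that s = T/2 + (2k+1)π/(2ρ). -/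
open Real Set

theorem periodic_green_zeros (T ρ : ℝ) (hT : 0 < T) (hρ : 0 < ρ)
    (hres : ∀ n : ℤ, ρ * T ≠ 2 * n * π) :
    ∀ s ∈ Icc 0 T,
      (GreenP T ρ 0 s = 0 ↔ ∃ k : ℤ, s = T / 2 + (2 * k + 1) * π / (2 * ρ)) := by
  have hden : 1 - cos (ρ * T) ≠ 0 := by
    intro h
    have h1 : cos (ρ * T) = 1 := by linarith
    obtain ⟨n, hn⟩ := (Real.cos_eq_one_iff (ρ * T)).1 h1
    exact hres n (by linarith)
  have hden2 : 2 * ρ * (1 - cos (ρ * T)) ≠ 0 := by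
    have : (2 : ℝ) * ρ ≠ 0 := by positivity
    exact mul_ne_zero this hden
  intro s hs
  have hG : GreenP T ρ 0 s =
      (sin (ρ * s) + sin (ρ * (T - s))) / (2 * ρ * (1 - cos (ρ * T))) := by
    unfold GreenP
    rcases le_or_gt s 0 with h | h
    · have hs0 : s = 0 := le_antisymm h hs.1
      simp [hs0]
    · rw [if_neg (not_le.2 h)]
      ring_nf
  rw [hG, div_eq_zero_iff]
  have hnum : sin (ρ * s) + sin (ρ * (T - s)) =
      2 * sin (ρ * T / 2) * cos (ρ * s - ρ * T / 2) := by
    have h := Real.sin_sub_sin (ρ * s) (-(ρ * (T - s)))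
    simp only [Real.sin_neg, sub_neg_eq_add] at h
    rw [h]; ring_nf
  have hsin : sin (ρ * T / 2) ≠ 0 := by
    intro h
    obtain ⟨n, hn⟩ := Real.sin_eq_zero_iff.1 h
    exact hres n (by linarith)
  constructor
  · rintro (h | h)
    · rw [hnum] at h
      have hc : cos (ρ * s - ρ * T / 2) = 0 := by
        rcases mul_eq_zero.1 h with h' | h'
        · rcases mul_eq_zero.1 h' with h'' | h''
          · norm_num at h''
          · exact absurd h'' hsin
        · exact h'
      obtain ⟨k, hk⟩ := Real.cos_eq_zero_iff.1 hc
      refine ⟨k, ?_⟩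
      field_simp at hk ⊢
      linarith
    · exact absurd h hden2
  · rintro ⟨k, rfl⟩
    left
    rw [hnum]
    have : ρ * (T / 2 + (2 * ↑k + 1) * π / (2 * ρ)) - ρ * T / 2 = (2 * ↑k + 1) * π / 2 := by
      field_simp
      ring
    rw [this, Real.cos_eq_zero_iff.2 ⟨k, rfl⟩]
    ring
end

section
/- Let T > 0 and k be a nonnegative integer. (i) If (4k+1)π/T < ρ < (4k+2)π/T, then (∫₀ᵀ G_P⁺(0,s) ds)/(∫₀ᵀ G_P⁻(0,s) ds) = (2k+1)/(2k+1−sin(ρT/2)). (ii) If (4k+2)π/T < ρ < (4k+3)π/T, then (∫₀ᵀ G_P⁺(0,s) ds)/(∫₀ᵀ G_P⁻(0,s) ds) = (2k+1−sin(ρT/2))/(2k+1). -/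
open Real Set intervalIntegral

lemma cpos_intble (a b : ℝ) :
    IntervalIntegrable (fun u => max (cos u) 0) MeasureTheory.volume a b :=
  (Real.continuous_cos.max continuous_const).intervalIntegrable a b

lemma int_cpos_period : ∫ u in (0:ℝ)..(2*π), max (cos u) 0 = 2 := by
  have hpi := Real.pi_pos
  have h1 : ∫ u in (0:ℝ)..(π/2), max (cos u) 0 = 1 := by
    rw [intervalIntegral.integral_congr (g := cos) ?_, integral_cos]
    · simp
    · intro x hx
      rw [uIcc_of_le (by linarith)] at hx
      exact max_eq_left (Real.cos_nonneg_of_mem_Icc ⟨by linarith [hx.1], hx.2⟩)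
  have h2 : ∫ u in (π/2:ℝ)..(3*π/2), max (cos u) 0 = 0 := by
    rw [intervalIntegral.integral_congr (g := fun _ => (0:ℝ)) ?_, intervalIntegral.integral_zero]
    intro x hx
    rw [uIcc_of_le (by linarith)] at hx
    exact max_eq_right (Real.cos_nonpos_of_pi_div_two_le_of_le hx.1 (by linarith [hx.2]))
  have h3 : ∫ u in (3*π/2:ℝ)..(2*π), max (cos u) 0 = 1 := by
    rw [intervalIntegral.integral_congr (g := cos) ?_, integral_cos]
    · rw [Real.sin_two_pi, show (3*π/2 : ℝ) = π + π/2 by ring]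
      simp [Real.sin_add]
    · intro x hx
      rw [uIcc_of_le (by linarith)] at hx
      show max (cos x) 0 = cos x
      rw [(Real.cos_sub_two_pi x).symm]
      exact max_eq_left (Real.cos_nonneg_of_mem_Icc ⟨by linarith [hx.1], by linarith [hx.2]⟩)
  have a1 := intervalIntegral.integral_add_adjacent_intervals
    (cpos_intble 0 (π/2)) (cpos_intble (π/2) (3*π/2))
  have a2 := intervalIntegral.integral_add_adjacent_intervals
    (cpos_intble 0 (3*π/2)) (cpos_intble (3*π/2) (2*π))
  rw [← a2, ← a1, h1, h2, h3]; norm_num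

lemma int_cpos_shift (a b : ℝ) (k : ℕ) :
    ∫ u in (a + 2*π*k)..(b + 2*π*k), max (cos u) 0 = ∫ u in a..b, max (cos u) 0 := by
  rw [← intervalIntegral.integral_comp_add_right (fun u => max (cos u) 0) (2*π*k)]
  apply intervalIntegral.integral_congr
  intro x _
  show max (cos (x + 2*π*(k:ℝ))) 0 = max (cos x) 0
  rw [show (x + 2*π*(k:ℝ)) = x + (k:ℝ) * (2*π) by ring, Real.cos_add_nat_mul_two_pi]

lemma int_cpos_two_pi_mul (k : ℕ) :
    ∫ u in (0:ℝ)..(2*π*k), max (cos u) 0 = 2*k := by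
  induction k with
  | zero => simp
  | succ n ih =>
    have key : ∫ u in (2*π*(n:ℝ))..(2*π + 2*π*(n:ℝ)), max (cos u) 0 = 2 := by
      have h := int_cpos_shift 0 (2*π) n
      rw [int_cpos_period, show (0:ℝ) + 2*π*(n:ℝ) = 2*π*(n:ℝ) by ring] at h
      exact h
    have adj := intervalIntegral.integral_add_adjacent_intervals
      (cpos_intble 0 (2*π*(n:ℝ))) (cpos_intble (2*π*(n:ℝ)) (2*π + 2*π*(n:ℝ)))
    rw [show (2*π*((n+1:ℕ):ℝ)) = 2*π + 2*π*(n:ℝ) by push_cast; ring, ← adj, ih, key]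
    push_cast; ring

lemma int_cpos_eval (k : ℕ) (θ : ℝ) (h1 : 2*π*k + π/2 ≤ θ) (h2 : θ ≤ 2*π*k + 3*π/2) :
    ∫ u in (0:ℝ)..θ, max (cos u) 0 = 2*k + 1 := by
  have hpi := Real.pi_pos
  have e2 : ∫ u in (2*π*k:ℝ)..(2*π*k + π/2), max (cos u) 0 = 1 := by
    have h := int_cpos_shift 0 (π/2) k
    rw [show (0:ℝ) + 2*π*(k:ℝ) = 2*π*(k:ℝ) by ring,
        show (π/2 + 2*π*(k:ℝ)) = 2*π*(k:ℝ) + π/2 by ring] at h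
    rw [h, intervalIntegral.integral_congr (g := cos) ?_, integral_cos]
    · simp
    · intro x hx
      rw [uIcc_of_le (by linarith)] at hx
      exact max_eq_left (Real.cos_nonneg_of_mem_Icc ⟨by linarith [hx.1], hx.2⟩)
  have e3 : ∫ u in (2*π*k + π/2 : ℝ)..θ, max (cos u) 0 = 0 := by
    rw [intervalIntegral.integral_congr (g := fun _ => (0:ℝ)) ?_, intervalIntegral.integral_zero]
    intro x hx
    rw [uIcc_of_le (by linarith)] at hx
    show max (cos x) 0 = 0
    rw [(Real.cos_sub_nat_mul_two_pi x k).symm]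
    refine max_eq_right (Real.cos_nonpos_of_pi_div_two_le_of_le ?_ ?_)
    · have := hx.1; linarith
    · have := hx.2; linarith
  have a1 := intervalIntegral.integral_add_adjacent_intervals
    (cpos_intble 0 (2*π*k)) (cpos_intble (2*π*k) (2*π*k + π/2))
  have a2 := intervalIntegral.integral_add_adjacent_intervals
    (cpos_intble 0 (2*π*k + π/2)) (cpos_intble (2*π*k + π/2) θ)
  rw [← a2, ← a1, int_cpos_two_pi_mul, e2, e3]
  ring

lemma int_cpos_sym (θ : ℝ) :
    ∫ u in (-θ)..θ, max (cos u) 0 = 2 * ∫ u in (0:ℝ)..θ, max (cos u) 0 := by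
  have h1 : ∫ u in (-θ)..(0:ℝ), max (cos u) 0 = ∫ u in (0:ℝ)..θ, max (cos u) 0 := by
    have h := intervalIntegral.integral_comp_neg (a := 0) (b := θ) (fun u => max (cos u) 0)
    rw [neg_zero] at h
    rw [← h]
    apply intervalIntegral.integral_congr
    intro x _
    show max (cos (-x)) 0 = max (cos x) 0
    rw [Real.cos_neg]
  rw [← intervalIntegral.integral_add_adjacent_intervals
    (cpos_intble (-θ) 0) (cpos_intble 0 θ), h1]
  ring

lemma maxneg_eq (x : ℝ) : max (-x) 0 = max x 0 - x := by
  rcases le_total x 0 with h | h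
  · rw [max_eq_left (neg_nonneg.2 h), max_eq_right h]; ring
  · rw [max_eq_right (neg_nonpos.2 h), max_eq_left h]; ring

/-- Main computation of the two integrals, valid for `2πk + π/2 ≤ ρT/2 ≤ 2πk + 3π/2`. -/
lemma int_green_eval (T ρ : ℝ) (hρ : 0 < ρ) (k : ℕ)
    (hl : 2*π*k + π/2 ≤ ρ*T/2) (hr : ρ*T/2 ≤ 2*π*k + 3*π/2) :
    (∫ s in (0:ℝ)..T, max (cos (ρ*s - ρ*T/2)) 0) = ρ⁻¹ * (2*(2*k+1)) ∧
    (∫ s in (0:ℝ)..T, max (-cos (ρ*s - ρ*T/2)) 0)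
        = ρ⁻¹ * (2*(2*k+1) - 2*sin (ρ*T/2)) := by
  have hρ' : ρ ≠ 0 := ne_of_gt hρ
  have comp1 : (∫ s in (0:ℝ)..T, max (cos (ρ*s - ρ*T/2)) 0)
      = ρ⁻¹ * ∫ u in (-(ρ*T/2))..(ρ*T/2), max (cos u) 0 := by
    rw [intervalIntegral.integral_comp_mul_sub (fun u => max (cos u) 0) hρ' (ρ*T/2)]
    try rw [show ρ*0 - ρ*T/2 = -(ρ*T/2) by ring]
    try rw [show ρ*T - ρ*T/2 = ρ*T/2 by ring]
    try rw [smul_eq_mul]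
  have hsym := int_cpos_sym (ρ*T/2)
  have heval := int_cpos_eval k (ρ*T/2) hl hr
  constructor
  · rw [comp1, hsym, heval]
    try ring
  · have comp2 : (∫ s in (0:ℝ)..T, max (-cos (ρ*s - ρ*T/2)) 0)
        = ρ⁻¹ * ∫ u in (-(ρ*T/2))..(ρ*T/2), max (-cos u) 0 := by
      rw [intervalIntegral.integral_comp_mul_sub (fun u => max (-cos u) 0) hρ' (ρ*T/2)]
      try rw [show ρ*0 - ρ*T/2 = -(ρ*T/2) by ring]
      try rw [show ρ*T - ρ*T/2 = ρ*T/2 by ring]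
      try rw [smul_eq_mul]
    have hsub : (∫ u in (-(ρ*T/2))..(ρ*T/2), max (-cos u) 0)
        = (∫ u in (-(ρ*T/2))..(ρ*T/2), max (cos u) 0)
          - ∫ u in (-(ρ*T/2))..(ρ*T/2), cos u := by
      rw [← intervalIntegral.integral_sub (cpos_intble _ _)
          (Real.continuous_cos.intervalIntegrable _ _)]
      apply intervalIntegral.integral_congr
      intro x _
      exact maxneg_eq (cos x)
    rw [comp2, hsub, hsym, heval, integral_cos, Real.sin_neg]
    ring

/-- Closed form of `GreenP T ρ 0 s` on `[0, T]`. -/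
lemma green_eq (T ρ : ℝ) (hT : 0 ≤ T) (hρ : ρ ≠ 0) (hs : sin (ρ*T/2) ≠ 0) :
    EqOn (fun s => GreenP T ρ 0 s)
      (fun s => (2*ρ*sin (ρ*T/2))⁻¹ * cos (ρ*s - ρ*T/2)) (uIcc (0:ℝ) T) := by
  have hd : 1 - cos (ρ*T) = 2 * sin (ρ*T/2) ^ 2 := by
    set th := ρ*T/2 with hth
    rw [show ρ*T = 2*th by rw [hth]; ring, Real.cos_two_mul]
    nlinarith [Real.sin_sq_add_cos_sq th]
  have trig : ∀ a b : ℝ, sin (b + (a - b)) + sin (b - (a - b)) = 2 * sin b * cos (a - b) := by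
    intro a b; simp only [Real.sin_add, Real.sin_sub, Real.cos_sub]; ring
  have key : ∀ s : ℝ, (sin (ρ*s) + sin (ρ*(T - s))) / (2*ρ*(1 - cos (ρ*T)))
      = (2*ρ*sin (ρ*T/2))⁻¹ * cos (ρ*s - ρ*T/2) := by
    intro s
    have hn : sin (ρ*s) + sin (ρ*(T - s))
        = 2 * sin (ρ*T/2) * cos (ρ*s - ρ*T/2) := by
      have h := trig (ρ*s) (ρ*T/2)
      rw [show ρ*T/2 + (ρ*s - ρ*T/2) = ρ*s by ring,
          show ρ*T/2 - (ρ*s - ρ*T/2) = ρ*(T - s) by ring] at h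
      exact h
    rw [hn, hd]
    field_simp
  intro s hmem
  rw [uIcc_of_le hT] at hmem
  show GreenP T ρ 0 s = (2*ρ*sin (ρ*T/2))⁻¹ * cos (ρ*s - ρ*T/2)
  unfold GreenP
  split_ifs with h
  · have hs0 : s = 0 := le_antisymm h hmem.1
    subst hs0
    simpa using key 0
  · have h' := key s
    simp only [sub_zero, add_zero] at h' ⊢
    exact h'

theorem periodic_gamma_cases_2A_2B (T : ℝ) (hT : 0 < T) (k : ℕ) (ρ : ℝ) :
    ((4 * k + 1) * π / T < ρ → ρ < (4 * k + 2) * π / T →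
      (∫ s in (0 : ℝ)..T, GreenPpos T ρ 0 s) / (∫ s in (0 : ℝ)..T, GreenPneg T ρ 0 s) =
        (2 * k + 1) / (2 * k + 1 - sin (ρ * T / 2))) ∧
    ((4 * k + 2) * π / T < ρ → ρ < (4 * k + 3) * π / T →
      (∫ s in (0 : ℝ)..T, GreenPpos T ρ 0 s) / (∫ s in (0 : ℝ)..T, GreenPneg T ρ 0 s) =
        (2 * k + 1 - sin (ρ * T / 2)) / (2 * k + 1)) := by
  have hpi := Real.pi_pos
  have hk0 : (0:ℝ) ≤ (k:ℝ) := Nat.cast_nonneg k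
  constructor
  · -- Case (i)
    intro h1 h2
    have hb1 : (4*(k:ℝ) + 1) * π < ρ * T := by
      have := (div_lt_iff₀ hT).mp h1; linarith
    have hb2 : ρ * T < (4*(k:ℝ) + 2) * π := by
      have := (lt_div_iff₀ hT).mp h2; linarith
    have hρ : 0 < ρ := by
      have h0 : (0:ℝ) < (4*(k:ℝ)+1)*π/T := by positivity
      exact lt_trans h0 h1
    have hl : 2*π*(k:ℝ) + π/2 ≤ ρ*T/2 := by linarith
    have hr : ρ*T/2 ≤ 2*π*(k:ℝ) + 3*π/2 := by linarith
    have hsinpos : 0 < sin (ρ*T/2) := by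
      rw [(Real.sin_sub_nat_mul_two_pi (ρ*T/2) k).symm]
      apply Real.sin_pos_of_pos_of_lt_pi <;> [linarith; linarith]
    have hsne : sin (ρ*T/2) ≠ 0 := ne_of_gt hsinpos
    obtain ⟨hI1, hI2⟩ := int_green_eval T ρ hρ k hl hr
    have hc : (0:ℝ) < (2*ρ*sin (ρ*T/2))⁻¹ := by positivity
    have Geq := green_eq T ρ hT.le (ne_of_gt hρ) hsne
    have epos : (∫ s in (0:ℝ)..T, GreenPpos T ρ 0 s)
        = (2*ρ*sin (ρ*T/2))⁻¹ * (ρ⁻¹ * (2*(2*(k:ℝ)+1))) := by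
      rw [show (∫ s in (0:ℝ)..T, GreenPpos T ρ 0 s)
          = ∫ s in (0:ℝ)..T, (2*ρ*sin (ρ*T/2))⁻¹ * max (cos (ρ*s - ρ*T/2)) 0 from
        intervalIntegral.integral_congr fun s hs => by
          show GreenPpos T ρ 0 s = (2*ρ*sin (ρ*T/2))⁻¹ * max (cos (ρ*s - ρ*T/2)) 0
          unfold GreenPpos
          rw [show GreenP T ρ 0 s
              = (2*ρ*sin (ρ*T/2))⁻¹ * cos (ρ*s - ρ*T/2) from Geq hs]
          rw [mul_max_of_nonneg _ _ hc.le, mul_zero]]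
      rw [intervalIntegral.integral_const_mul, hI1]
    have eneg : (∫ s in (0:ℝ)..T, GreenPneg T ρ 0 s)
        = (2*ρ*sin (ρ*T/2))⁻¹ * (ρ⁻¹ * (2*(2*(k:ℝ)+1) - 2*sin (ρ*T/2))) := by
      rw [show (∫ s in (0:ℝ)..T, GreenPneg T ρ 0 s)
          = ∫ s in (0:ℝ)..T, (2*ρ*sin (ρ*T/2))⁻¹ * max (-cos (ρ*s - ρ*T/2)) 0 from
        intervalIntegral.integral_congr fun s hs => by
          show GreenPneg T ρ 0 s = (2*ρ*sin (ρ*T/2))⁻¹ * max (-cos (ρ*s - ρ*T/2)) 0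
          unfold GreenPneg
          rw [show GreenP T ρ 0 s
              = (2*ρ*sin (ρ*T/2))⁻¹ * cos (ρ*s - ρ*T/2) from Geq hs]
          rw [mul_max_of_nonneg _ _ hc.le, mul_zero, mul_neg]]
      rw [intervalIntegral.integral_const_mul, hI2]
    rw [epos, eneg, mul_div_mul_left _ _ (ne_of_gt hc),
        mul_div_mul_left _ _ (inv_ne_zero (ne_of_gt hρ)),
        show (2*(2*(k:ℝ)+1) - 2*sin (ρ*T/2)) = 2*((2*(k:ℝ)+1) - sin (ρ*T/2)) by ring,
        mul_div_mul_left _ _ (two_ne_zero)]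
  · -- Case (ii)
    intro h1 h2
    have hb1 : (4*(k:ℝ) + 2) * π < ρ * T := by
      have := (div_lt_iff₀ hT).mp h1; linarith
    have hb2 : ρ * T < (4*(k:ℝ) + 3) * π := by
      have := (lt_div_iff₀ hT).mp h2; linarith
    have hρ : 0 < ρ := by
      have h0 : (0:ℝ) < (4*(k:ℝ)+2)*π/T := by positivity
      exact lt_trans h0 h1
    have hl : 2*π*(k:ℝ) + π/2 ≤ ρ*T/2 := by linarith
    have hr : ρ*T/2 ≤ 2*π*(k:ℝ) + 3*π/2 := by linarith
    have hsinneg : sin (ρ*T/2) < 0 := by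
      have e2 : sin ((ρ*T/2 - (k:ℝ) * (2*π)) - π) = -sin (ρ*T/2 - (k:ℝ) * (2*π)) :=
        Real.sin_sub_pi _
      have hp : 0 < sin ((ρ*T/2 - (k:ℝ) * (2*π)) - π) := by
        apply Real.sin_pos_of_pos_of_lt_pi <;> [linarith; linarith]
      rw [(Real.sin_sub_nat_mul_two_pi (ρ*T/2) k).symm]
      linarith [e2]
    have hsne : sin (ρ*T/2) ≠ 0 := ne_of_lt hsinneg
    obtain ⟨hI1, hI2⟩ := int_green_eval T ρ hρ k hl hr
    have hcneg : (2*ρ*sin (ρ*T/2))⁻¹ < 0 :=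
      inv_lt_zero.mpr (mul_neg_of_pos_of_neg (by linarith) hsinneg)
    have hc : (0:ℝ) < -(2*ρ*sin (ρ*T/2))⁻¹ := by linarith
    have Geq := green_eq T ρ hT.le (ne_of_gt hρ) hsne
    have epos : (∫ s in (0:ℝ)..T, GreenPpos T ρ 0 s)
        = -(2*ρ*sin (ρ*T/2))⁻¹ * (ρ⁻¹ * (2*(2*(k:ℝ)+1) - 2*sin (ρ*T/2))) := by
      rw [show (∫ s in (0:ℝ)..T, GreenPpos T ρ 0 s)
          = ∫ s in (0:ℝ)..T, -(2*ρ*sin (ρ*T/2))⁻¹ * max (-cos (ρ*s - ρ*T/2)) 0 from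
        intervalIntegral.integral_congr fun s hs => by
          show GreenPpos T ρ 0 s = -(2*ρ*sin (ρ*T/2))⁻¹ * max (-cos (ρ*s - ρ*T/2)) 0
          unfold GreenPpos
          rw [show GreenP T ρ 0 s
              = (2*ρ*sin (ρ*T/2))⁻¹ * cos (ρ*s - ρ*T/2) from Geq hs]
          rw [mul_max_of_nonneg _ _ hc.le, mul_zero]
          try congr 1
          try ring]
      rw [intervalIntegral.integral_const_mul, hI2]
    have eneg : (∫ s in (0:ℝ)..T, GreenPneg T ρ 0 s)
        = -(2*ρ*sin (ρ*T/2))⁻¹ * (ρ⁻¹ * (2*(2*(k:ℝ)+1))) := by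
      rw [show (∫ s in (0:ℝ)..T, GreenPneg T ρ 0 s)
          = ∫ s in (0:ℝ)..T, -(2*ρ*sin (ρ*T/2))⁻¹ * max (cos (ρ*s - ρ*T/2)) 0 from
        intervalIntegral.integral_congr fun s hs => by
          show GreenPneg T ρ 0 s = -(2*ρ*sin (ρ*T/2))⁻¹ * max (cos (ρ*s - ρ*T/2)) 0
          unfold GreenPneg
          rw [show GreenP T ρ 0 s
              = (2*ρ*sin (ρ*T/2))⁻¹ * cos (ρ*s - ρ*T/2) from Geq hs]
          rw [mul_max_of_nonneg _ _ hc.le, mul_zero]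
          try congr 1
          try ring]
      rw [intervalIntegral.integral_const_mul, hI1]
    rw [epos, eneg, mul_div_mul_left _ _ (ne_of_gt hc),
        mul_div_mul_left _ _ (inv_ne_zero (ne_of_gt hρ)),
        show (2*(2*(k:ℝ)+1) - 2*sin (ρ*T/2)) = 2*((2*(k:ℝ)+1) - sin (ρ*T/2)) by ring,
        mul_div_mul_left _ _ (two_ne_zero)]
end

section
/- Let T > 0 and ρ > 0 with ρT not an integer multiple of π. (i) If ρ < π/T, then G_D(t,s) < 0 for all (t,s) ∈ (0,T) × (0,T). (ii) If ρ > π/T, then there exist points (t₁,s₁), (t₂,s₂) ∈ (0,T) × (0,T) with G_D(t₁,s₁) > 0 and G_D(t₂,s₂) < 0. -/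
open Real Set

/-- The Green's function of the Dirichlet problem `u'' + ρ²u = 0`,
`u(0) = u(T) = 0`. -/
noncomputable def GreenD (T ρ t s : ℝ) : ℝ :=
  if s ≤ t then -(sin (ρ * s) * sin (ρ * (T - t))) / (ρ * sin (ρ * T))
  else -(sin (ρ * t) * sin (ρ * (T - s))) / (ρ * sin (ρ * T))

theorem dirichlet_green_sign (T ρ : ℝ) (hT : 0 < T) (hρ : 0 < ρ)
    (hres : ∀ n : ℤ, ρ * T ≠ n * π) :
    (ρ < π / T → ∀ t ∈ Ioo 0 T, ∀ s ∈ Ioo 0 T, GreenD T ρ t s < 0) ∧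
    (π / T < ρ →
      (∃ t₁ ∈ Ioo 0 T, ∃ s₁ ∈ Ioo 0 T, 0 < GreenD T ρ t₁ s₁) ∧
      (∃ t₂ ∈ Ioo 0 T, ∃ s₂ ∈ Ioo 0 T, GreenD T ρ t₂ s₂ < 0)) := by
  have hπ := pi_pos
  constructor
  · intro hlt t ht s hs
    obtain ⟨ht0, htT⟩ := ht
    obtain ⟨hs0, hsT⟩ := hs
    have hTpi : ρ * T < π := by
      have := (lt_div_iff₀ hT).mp hlt; linarith
    have hsinT : 0 < sin (ρ * T) :=
      sin_pos_of_pos_of_lt_pi (by positivity) hTpi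
    unfold GreenD
    split_ifs with h
    · apply div_neg_of_neg_of_pos
      · have h1 : 0 < sin (ρ * s) :=
          sin_pos_of_pos_of_lt_pi (by positivity) (by nlinarith)
        have h2 : 0 < sin (ρ * (T - t)) :=
          sin_pos_of_pos_of_lt_pi (by nlinarith) (by nlinarith)
        nlinarith
      · positivity
    · apply div_neg_of_neg_of_pos
      · have h1 : 0 < sin (ρ * t) :=
          sin_pos_of_pos_of_lt_pi (by positivity) (by nlinarith)
        have h2 : 0 < sin (ρ * (T - s)) :=
          sin_pos_of_pos_of_lt_pi (by nlinarith) (by nlinarith)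
        nlinarith
      · positivity
  · intro hgt
    have hπT : π < ρ * T := by
      have := (div_lt_iff₀ hT).mp hgt; linarith
    have hsinT : sin (ρ * T) ≠ 0 := by
      rw [Real.sin_ne_zero_iff]
      intro n h
      exact hres n h.symm
    -- the points
    set s₀ : ℝ := π / (2 * ρ) with hs₀def
    set m : ℝ := min π (ρ * T - π) with hmdef
    have hm0 : 0 < m := lt_min hπ (by linarith)
    have hmπ : m ≤ π := min_le_left _ _
    have hmT : m ≤ ρ * T - π := min_le_right _ _
    set s₁ : ℝ := (π + m / 2) / ρ with hs₁def
    have hρs₀ : ρ * s₀ = π / 2 := by field_simp [hs₀def]; rw [hs₀def]; field_simp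
    have hρs₁ : ρ * s₁ = π + m / 2 := by field_simp [hs₁def]; rw [hs₁def]; field_simp
    have hs₁0 : 0 < s₁ := by positivity
    have hs₁T : s₁ < T := by
      rw [hs₁def, div_lt_iff₀ hρ]; nlinarith
    have hs₀s₁ : s₀ < s₁ := by
      have : ρ * s₀ < ρ * s₁ := by rw [hρs₀, hρs₁]; linarith
      exact lt_of_mul_lt_mul_left this hρ.le
    have hs₀0 : 0 < s₀ := by positivity
    set δ : ℝ := min (T - s₁) (π / ρ) / 2 with hδdef
    have hδ0 : 0 < δ := by
      have : 0 < min (T - s₁) (π / ρ) := lt_min (by linarith) (by positivity)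
      rw [hδdef]; linarith
    set t : ℝ := T - δ with htdef
    have hδle : δ ≤ (T - s₁) / 2 := by
      rw [hδdef]; have := min_le_left (T - s₁) (π / ρ); linarith
    have hδπ : ρ * δ ≤ π / 2 := by
      have h1 : δ ≤ (π / ρ) / 2 := by
        rw [hδdef]; have := min_le_right (T - s₁) (π / ρ); linarith
      have : ρ * δ ≤ ρ * ((π / ρ) / 2) := by nlinarith
      calc ρ * δ ≤ ρ * ((π / ρ) / 2) := this
        _ = π / 2 := by field_simp
    have hts₁ : s₁ < t := by rw [htdef]; linarith
    have htT : t < T := by rw [htdef]; linarith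
    have ht0 : 0 < t := lt_trans hs₁0 hts₁
    have hTt : ρ * (T - t) = ρ * δ := by rw [htdef]; ring
    -- signs
    have hP : sin (ρ * s₀) = 1 := by rw [hρs₀, sin_pi_div_two]
    have hR : 0 < sin (ρ * (T - t)) := by
      rw [hTt]
      exact sin_pos_of_pos_of_lt_pi (by positivity) (by linarith)
    have hQ : sin (ρ * s₁) < 0 := by
      rw [hρs₁, add_comm, sin_add_pi, neg_lt, neg_zero]
      exact sin_pos_of_pos_of_lt_pi (by linarith) (by linarith)
    have hG0 : GreenD T ρ t s₀ = -(sin (ρ * (T - t))) / (ρ * sin (ρ * T)) := by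
      rw [GreenD, if_pos (le_of_lt (lt_trans hs₀s₁ hts₁)), hP, one_mul]
    have hG1 : GreenD T ρ t s₁ =
        -(sin (ρ * s₁) * sin (ρ * (T - t))) / (ρ * sin (ρ * T)) := by
      rw [GreenD, if_pos hts₁.le]
    have hmemt : t ∈ Ioo 0 T := ⟨ht0, htT⟩
    have hmem0 : s₀ ∈ Ioo 0 T := ⟨hs₀0, lt_trans hs₀s₁ hs₁T⟩
    have hmem1 : s₁ ∈ Ioo 0 T := ⟨hs₁0, hs₁T⟩
    rcases hsinT.lt_or_gt with hc | hc
    · -- sin (ρT) < 0 : G(t,s₀) > 0, G(t,s₁) < 0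
      refine ⟨⟨t, hmemt, s₀, hmem0, ?_⟩, ⟨t, hmemt, s₁, hmem1, ?_⟩⟩
      · rw [hG0]
        exact div_pos_of_neg_of_neg (neg_neg_iff_pos.mpr hR)
          (mul_neg_of_pos_of_neg hρ hc)
      · rw [hG1]
        exact div_neg_of_pos_of_neg (neg_pos.mpr (mul_neg_of_neg_of_pos hQ hR))
          (mul_neg_of_pos_of_neg hρ hc)
    · refine ⟨⟨t, hmemt, s₁, hmem1, ?_⟩, ⟨t, hmemt, s₀, hmem0, ?_⟩⟩
      · rw [hG1]
        exact div_pos (neg_pos.mpr (mul_neg_of_neg_of_pos hQ hR)) (mul_pos hρ hc)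
      · rw [hG0]
        exact div_neg_of_neg_of_pos (neg_neg_iff_pos.mpr hR) (mul_pos hρ hc)
end

section
/- Let T > 0 and ρ > π/T with ρT not an integer multiple of 2π, and set γ = (∫₀ᵀ G_P⁺(0,s) ds)/(∫₀ᵀ G_P⁻(0,s) ds). Let h : [0,T] → ℝ be continuous and suppose there exist constants m, M with 0 < m ≤ h(t) ≤ M for all t ∈ [0,T] and M/m ≤ γ. Then ∫₀ᵀ G_P(t,s)·h(s) ds ≥ 0 for every t ∈ [0,T]; that is, the unique solution of u'' + ρ²u = h(t), u(0) = u(T), u'(0) = u'(T) is a nonnegative function on [0,T]. -/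
open Real Set intervalIntegral

/-- One-variable profile of the Green's function. -/
noncomputable def GF (T ρ x : ℝ) : ℝ :=
  (sin (ρ * x) + sin (ρ * (T - x))) / (2 * ρ * (1 - cos (ρ * T)))

lemma GF_continuous (T ρ : ℝ) : Continuous (GF T ρ) := by
  unfold GF
  fun_prop

lemma GF_symm (T ρ x : ℝ) : GF T ρ (T - x) = GF T ρ x := by
  unfold GF
  rw [show T - (T - x) = x from by ring, add_comm]

lemma GreenP_eq (T ρ t s : ℝ) : GreenP T ρ t s = GF T ρ |t - s| := by
  unfold GreenP GF
  split_ifs with hst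
  · rw [abs_of_nonneg (by linarith)]
    ring_nf
  · push_neg at hst
    rw [abs_sub_comm, abs_of_nonneg (by linarith)]
    ring_nf

/-- Translation invariance of the integral of a symmetric profile. -/
lemma shift_integral (T t : ℝ) (ht0 : 0 ≤ t) (htT : t ≤ T) (F : ℝ → ℝ)
    (hF : Continuous F) (hsymm : ∀ x, F (T - x) = F x) :
    (∫ s in (0 : ℝ)..T, F |t - s|) = ∫ s in (0 : ℝ)..T, F s := by
  have hc : Continuous fun s : ℝ => F |t - s| :=
    hF.comp ((continuous_const.sub continuous_id).abs)
  have hsplit : (∫ s in (0 : ℝ)..T, F |t - s|)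
      = (∫ s in (0 : ℝ)..t, F |t - s|) + ∫ s in t..T, F |t - s| :=
    (intervalIntegral.integral_add_adjacent_intervals (hc.intervalIntegrable _ _)
      (hc.intervalIntegrable _ _)).symm
  have h1 : (∫ s in (0 : ℝ)..t, F |t - s|) = ∫ s in (0 : ℝ)..t, F (t - s) := by
    apply intervalIntegral.integral_congr
    intro s hs
    rw [uIcc_of_le ht0] at hs
    dsimp only
    rw [abs_of_nonneg (by linarith [hs.2])]
  have h2 : (∫ s in t..T, F |t - s|) = ∫ s in t..T, F (s - t) := by
    apply intervalIntegral.integral_congr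
    intro s hs
    rw [uIcc_of_le htT] at hs
    dsimp only
    rw [abs_sub_comm, abs_of_nonneg (by linarith [hs.1])]
  have h1' : (∫ s in (0 : ℝ)..t, F (t - s)) = ∫ s in (0 : ℝ)..t, F s := by
    rw [intervalIntegral.integral_comp_sub_left F t]
    norm_num
  have h2' : (∫ s in t..T, F (s - t)) = ∫ s in t..T, F s := by
    rw [intervalIntegral.integral_comp_sub_right F t]
    have : (∫ s in (t - t)..(T - t), F s) = ∫ s in (0 : ℝ)..(T - t), F s := by
      norm_num
    rw [this]
    have hsym : (∫ s in (0 : ℝ)..(T - t), F s) = ∫ s in (0 : ℝ)..(T - t), F (T - s) := by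
      apply intervalIntegral.integral_congr
      intro s _
      exact (hsymm s).symm
    rw [hsym, intervalIntegral.integral_comp_sub_left F T,
      show T - (T - t) = t from by ring, sub_zero]
  rw [hsplit, h1, h2, h1', h2',
    intervalIntegral.integral_add_adjacent_intervals (hF.intervalIntegrable _ _)
      (hF.intervalIntegrable _ _)]

theorem periodic_linear_nonneg_solution (T ρ : ℝ) (hT : 0 < T)
    (hρ : π / T < ρ) (hres : ∀ n : ℤ, ρ * T ≠ 2 * n * π)
    (h : ℝ → ℝ) (hh : ContinuousOn h (Icc 0 T))
    (m M : ℝ) (hm : 0 < m)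
    (hbound : ∀ t ∈ Icc 0 T, m ≤ h t ∧ h t ≤ M)
    (hγ : M / m ≤
      (∫ s in (0 : ℝ)..T, GreenPpos T ρ 0 s) / ∫ s in (0 : ℝ)..T, GreenPneg T ρ 0 s) :
    ∀ t ∈ Icc 0 T, 0 ≤ ∫ s in (0 : ℝ)..T, GreenP T ρ t s * h s := by
  have hT0 : (0 : ℝ) ≤ T := hT.le
  -- profile positive / negative parts
  set Fp : ℝ → ℝ := fun x => max (GF T ρ x) 0 with hFp
  set Fn : ℝ → ℝ := fun x => max (-(GF T ρ x)) 0 with hFn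
  have hFpc : Continuous Fp := (GF_continuous T ρ).max continuous_const
  have hFnc : Continuous Fn := (GF_continuous T ρ).neg.max continuous_const
  have hFps : ∀ x, Fp (T - x) = Fp x := fun x => by simp only [hFp, GF_symm]
  have hFns : ∀ x, Fn (T - x) = Fn x := fun x => by simp only [hFn, GF_symm]
  have hpos_eq : ∀ t s : ℝ, GreenPpos T ρ t s = Fp |t - s| := by
    intro t s; rw [GreenPpos, GreenP_eq]
  have hneg_eq : ∀ t s : ℝ, GreenPneg T ρ t s = Fn |t - s| := by
    intro t s; rw [GreenPneg, GreenP_eq]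
  -- the integrals at an arbitrary t equal the profile integrals
  have hA : ∀ t, 0 ≤ t → t ≤ T →
      (∫ s in (0 : ℝ)..T, GreenPpos T ρ t s) = ∫ s in (0 : ℝ)..T, Fp s := by
    intro t ht0 htT
    rw [show (fun s => GreenPpos T ρ t s) = fun s => Fp |t - s| from funext (hpos_eq t)]
    exact shift_integral T t ht0 htT Fp hFpc hFps
  have hB : ∀ t, 0 ≤ t → t ≤ T →
      (∫ s in (0 : ℝ)..T, GreenPneg T ρ t s) = ∫ s in (0 : ℝ)..T, Fn s := by
    intro t ht0 htT
    rw [show (fun s => GreenPneg T ρ t s) = fun s => Fn |t - s| from funext (hneg_eq t)]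
    exact shift_integral T t ht0 htT Fn hFnc hFns
  set A : ℝ := ∫ s in (0 : ℝ)..T, Fp s with hAdef
  set B : ℝ := ∫ s in (0 : ℝ)..T, Fn s with hBdef
  -- rewrite hypothesis at t = 0
  rw [hA 0 le_rfl hT0, hB 0 le_rfl hT0] at hγ
  have hMm : m ≤ M := le_trans (hbound 0 ⟨le_rfl, hT0⟩).1 (hbound 0 ⟨le_rfl, hT0⟩).2
  have hone : (1 : ℝ) ≤ A / B := le_trans ((one_le_div hm).2 hMm) hγ
  have hB0 : 0 ≤ B :=
    intervalIntegral.integral_nonneg hT0 fun s _ => le_max_right _ _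
  have hBpos : 0 < B := by
    rcases hB0.lt_or_eq with hlt | heq
    · exact hlt
    · exfalso; rw [← heq, div_zero] at hone; linarith
  have key : M * B ≤ A * m := (div_le_div_iff₀ hm hBpos).1 hγ
  intro t ht
  obtain ⟨ht0, htT⟩ := ht
  -- continuity and integrability
  have hGpc : Continuous fun s => GreenPpos T ρ t s := by
    rw [show (fun s => GreenPpos T ρ t s) = fun s => Fp |t - s| from funext (hpos_eq t)]
    exact hFpc.comp ((continuous_const.sub continuous_id).abs)
  have hGnc : Continuous fun s => GreenPneg T ρ t s := by
    rw [show (fun s => GreenPneg T ρ t s) = fun s => Fn |t - s| from funext (hneg_eq t)]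
    exact hFnc.comp ((continuous_const.sub continuous_id).abs)
  have hhint : ∀ g : ℝ → ℝ, Continuous g →
      IntervalIntegrable (fun s => g s * h s) MeasureTheory.volume 0 T := by
    intro g hg
    apply ContinuousOn.intervalIntegrable
    rw [uIcc_of_le hT0]
    exact hg.continuousOn.mul hh
  have hIp : IntervalIntegrable (fun s => GreenPpos T ρ t s * h s) MeasureTheory.volume 0 T :=
    hhint _ hGpc
  have hIn : IntervalIntegrable (fun s => GreenPneg T ρ t s * h s) MeasureTheory.volume 0 T :=
    hhint _ hGnc
  have hIpm : IntervalIntegrable (fun s => GreenPpos T ρ t s * m) MeasureTheory.volume 0 T :=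
    (hGpc.mul continuous_const).intervalIntegrable _ _
  have hInM : IntervalIntegrable (fun s => GreenPneg T ρ t s * M) MeasureTheory.volume 0 T :=
    (hGnc.mul continuous_const).intervalIntegrable _ _
  -- split the integral
  have hsplit : (∫ s in (0 : ℝ)..T, GreenP T ρ t s * h s)
      = (∫ s in (0 : ℝ)..T, GreenPpos T ρ t s * h s)
        - ∫ s in (0 : ℝ)..T, GreenPneg T ρ t s * h s := by
    rw [← intervalIntegral.integral_sub hIp hIn]
    apply intervalIntegral.integral_congr
    intro s _
    dsimp only
    have : GreenP T ρ t s = GreenPpos T ρ t s - GreenPneg T ρ t s :=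
      (max_zero_sub_max_neg_zero_eq_self (GreenP T ρ t s)).symm
    rw [this, sub_mul]
  -- lower bound for the positive part
  have hlow : A * m ≤ ∫ s in (0 : ℝ)..T, GreenPpos T ρ t s * h s := by
    have : (∫ s in (0 : ℝ)..T, GreenPpos T ρ t s * m)
        ≤ ∫ s in (0 : ℝ)..T, GreenPpos T ρ t s * h s := by
      apply intervalIntegral.integral_mono_on hT0 hIpm hIp
      intro s hs
      exact mul_le_mul_of_nonneg_left (hbound s hs).1 (le_max_right _ _)
    calc A * m = (∫ s in (0 : ℝ)..T, GreenPpos T ρ t s) * m := by rw [hA t ht0 htT]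
      _ = ∫ s in (0 : ℝ)..T, GreenPpos T ρ t s * m := (intervalIntegral.integral_mul_const _ _).symm
      _ ≤ _ := this
  -- upper bound for the negative part
  have hup : (∫ s in (0 : ℝ)..T, GreenPneg T ρ t s * h s) ≤ M * B := by
    have : (∫ s in (0 : ℝ)..T, GreenPneg T ρ t s * h s)
        ≤ ∫ s in (0 : ℝ)..T, GreenPneg T ρ t s * M := by
      apply intervalIntegral.integral_mono_on hT0 hIn hInM
      intro s hs
      exact mul_le_mul_of_nonneg_left (hbound s hs).2 (le_max_right _ _)
    calc (∫ s in (0 : ℝ)..T, GreenPneg T ρ t s * h s)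
        ≤ ∫ s in (0 : ℝ)..T, GreenPneg T ρ t s * M := this
      _ = (∫ s in (0 : ℝ)..T, GreenPneg T ρ t s) * M := intervalIntegral.integral_mul_const _ _
      _ = M * B := by rw [hB t ht0 htT, mul_comm]
  rw [hsplit]
  linarith
end

section
/- If u : [0,1] → ℝ is twice continuously differentiable and satisfies u''(t) + 60·u(t) = t·(1−t) for all t ∈ [0,1] with u(0) = u(1) = 0, then u(t) > 0 for all t ∈ (0,1). Moreover, such a function u exists and is unique. -/
open Real Set

noncomputable def om : ℝ := Real.sqrt 60

lemma om_sq : om^2 = 60 := Real.sq_sqrt (by norm_num)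
lemma om_pos : 0 < om := Real.sqrt_pos.mpr (by norm_num)

lemma om_lb : 9*π/4 ≤ om := by
  have hπ : π < 3.15 := Real.pi_lt_d2
  have hπ2 : 0 < π := Real.pi_pos
  have h : (9*π/4)^2 ≤ 60 := by nlinarith
  calc 9*π/4 = Real.sqrt ((9*π/4)^2) := (Real.sqrt_sq (by positivity)).symm
    _ ≤ om := Real.sqrt_le_sqrt h

lemma om_ub : om ≤ 5*π/2 := by
  have hπ : 3.141592 < π := Real.pi_gt_d6
  have h : (60:ℝ) ≤ (5*π/2)^2 := by nlinarith
  calc om ≤ Real.sqrt ((5*π/2)^2) := Real.sqrt_le_sqrt h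
    _ = 5*π/2 := Real.sqrt_sq (by positivity)

lemma sin_om : Real.sqrt 2 / 2 ≤ Real.sin om := by
  have h1 := om_lb; have h2 := om_ub; have hπ := Real.pi_pos
  have hx : om - 2*π ∈ Icc (-(π/2)) (π/2) := ⟨by linarith, by linarith⟩
  have hy : (π/4 : ℝ) ∈ Icc (-(π/2)) (π/2) := ⟨by linarith, by linarith⟩
  have h := Real.strictMonoOn_sin.monotoneOn hy hx (by linarith)
  rw [Real.sin_sub_two_pi] at h
  rw [← Real.sin_pi_div_four]
  exact h

lemma cos_om_nonneg : 0 ≤ Real.cos om := by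
  rw [← Real.cos_sub_two_pi]
  exact Real.cos_nonneg_of_mem_Icc ⟨by linarith [om_lb, Real.pi_pos], by linarith [om_ub]⟩

lemma sin_om_pos : 0 < Real.sin om := by
  have : (0:ℝ) < Real.sqrt 2 / 2 := by positivity
  linarith [sin_om]

lemma hd_sin (a t : ℝ) : HasDerivAt (fun s : ℝ => Real.sin (a*s)) (a * Real.cos (a*t)) t := by
  have h := (Real.hasDerivAt_sin (a*t)).comp t ((hasDerivAt_id t).const_mul a)
  exact h.congr_deriv (by ring)

lemma hd_cos (a t : ℝ) : HasDerivAt (fun s : ℝ => Real.cos (a*s)) (-(a * Real.sin (a*t))) t := by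
  have h := (Real.hasDerivAt_cos (a*t)).comp t ((hasDerivAt_id t).const_mul a)
  exact h.congr_deriv (by ring)

noncomputable def kk : ℝ := (1 - Real.cos om) / (1800 * Real.sin om)

lemma kk_nonneg : 0 ≤ kk :=
  div_nonneg (by linarith [Real.cos_le_one om]) (by nlinarith [sin_om_pos])

lemma kk_le : kk ≤ 1/1200 := by
  have s2 : (1.4:ℝ) ≤ Real.sqrt 2 := by
    nlinarith [Real.sq_sqrt (show (0:ℝ) ≤ 2 by norm_num), Real.sqrt_nonneg 2]
  have hsin : (0.7:ℝ) ≤ Real.sin om := by linarith [sin_om]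
  have hc := cos_om_nonneg
  rw [kk, div_le_iff₀ (by nlinarith)]
  nlinarith

noncomputable def U : ℝ → ℝ :=
  fun t => (t - t^2)/60 + (1 - Real.cos (om*t))/1800 - kk * Real.sin (om*t)
noncomputable def U' : ℝ → ℝ :=
  fun t => (1 - 2*t)/60 + om * Real.sin (om*t)/1800 - kk * (om * Real.cos (om*t))
noncomputable def U'' : ℝ → ℝ :=
  fun t => -(1/30) + om^2 * Real.cos (om*t)/1800 + kk * (om^2 * Real.sin (om*t))

lemma hUd (t : ℝ) : HasDerivAt U (U' t) t := by
  have h1 : HasDerivAt (fun s:ℝ => (s - s^2)/60) ((1 - 2*t)/60) t := by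
    have := ((hasDerivAt_id t).sub (hasDerivAt_pow 2 t)).div_const 60
    exact this.congr_deriv (by norm_num)
  have h2 : HasDerivAt (fun s:ℝ => (1 - Real.cos (om*s))/1800) (om * Real.sin (om*t)/1800) t := by
    have := ((hasDerivAt_const t (1:ℝ)).sub (hd_cos om t)).div_const 1800
    exact this.congr_deriv (by ring)
  have h3 : HasDerivAt (fun s:ℝ => kk * Real.sin (om*s)) (kk * (om * Real.cos (om*t))) t :=
    (hd_sin om t).const_mul kk
  exact (h1.add h2).sub h3

lemma hUd' (t : ℝ) : HasDerivAt U' (U'' t) t := by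
  have h1 : HasDerivAt (fun s:ℝ => (1 - 2*s)/60) (-(1/30)) t := by
    have := ((hasDerivAt_const t (1:ℝ)).sub ((hasDerivAt_id t).const_mul 2)).div_const 60
    exact this.congr_deriv (by norm_num)
  have h2 : HasDerivAt (fun s:ℝ => om * Real.sin (om*s)/1800) (om^2 * Real.cos (om*t)/1800) t := by
    have := ((hd_sin om t).const_mul om).div_const 1800
    exact this.congr_deriv (by ring)
  have h3 : HasDerivAt (fun s:ℝ => kk * (om * Real.cos (om*s)))
      (-(kk * (om^2 * Real.sin (om*t)))) t := by
    have := ((hd_cos om t).const_mul om).const_mul kk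
    exact this.congr_deriv (by ring)
  have h := (h1.add h2).sub h3
  exact h.congr_deriv (by unfold U''; ring)

lemma derivU : deriv U = U' := funext fun t => (hUd t).deriv
lemma derivU' : deriv U' = U'' := funext fun t => (hUd' t).deriv

lemma contU : ContDiff ℝ 2 U := by
  unfold U
  have h1 : ContDiff ℝ 2 (fun t:ℝ => (t - t^2)/60) := (contDiff_id.sub (contDiff_id.pow 2)).div_const 60
  have h2 : ContDiff ℝ 2 (fun t:ℝ => (1 - Real.cos (om*t))/1800) :=
    (contDiff_const.sub (Real.contDiff_cos.comp (contDiff_id.const_smul om))).div_const 1800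
  have h3 : ContDiff ℝ 2 (fun t:ℝ => kk * Real.sin (om*t)) :=
    (Real.contDiff_sin.comp (contDiff_id.const_smul om)).const_smul kk
  exact (h1.add h2).sub h3

lemma U_ode : ∀ t ∈ Icc (0:ℝ) 1, deriv (deriv U) t + 60 * U t = t * (1 - t) := by
  intro t _
  rw [derivU, derivU']
  unfold U'' U
  rw [om_sq]
  ring

lemma U0 : U 0 = 0 := by unfold U; simp
lemma U1 : U 1 = 0 := by
  unfold U kk
  have hs : Real.sin om ≠ 0 := ne_of_gt sin_om_pos
  field_simp
  ring

lemma zero_of_ode (w : ℝ → ℝ) (hw : ContDiff ℝ 2 w)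
    (hode : ∀ t ∈ Icc (0:ℝ) 1, deriv (deriv w) t = -60 * w t)
    (h0 : w 0 = 0) (h0' : deriv w 0 = 0) : ∀ t ∈ Icc (0:ℝ) 1, w t = 0 := by
  have hw2 : ContDiff ℝ ((1:ℕ) + 1) w := by exact_mod_cast hw
  have hwd : Differentiable ℝ w := hw.differentiable (by norm_num)
  have hw1 : ContDiff ℝ 1 (deriv w) := by
    have := (contDiff_succ_iff_deriv.mp hw2).2.2
    exact_mod_cast this
  have hwd' : Differentiable ℝ (deriv w) := hw1.differentiable one_ne_zero
  set h : ℝ → ℝ := fun t => 60 * (w t)^2 + (deriv w t)^2 with hdef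
  have hh : ∀ t, HasDerivAt h
      (120 * w t * deriv w t + 2 * deriv w t * deriv (deriv w) t) t := by
    intro t
    have h1 : HasDerivAt w (deriv w t) t := (hwd t).hasDerivAt
    have h2 : HasDerivAt (deriv w) (deriv (deriv w) t) t := (hwd' t).hasDerivAt
    have := ((h1.pow 2).const_mul 60).add (h2.pow 2)
    exact this.congr_deriv (by ring)
  have hcz : ∀ x ∈ Icc (0:ℝ) 1, h x = h 0 := by
    apply constant_of_has_deriv_right_zero
    · exact ((continuous_const.mul (hwd.continuous.pow 2)).add
        ((hwd'.continuous.pow 2))).continuousOn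
    · intro x hx
      have hz : (120 * w x * deriv w x + 2 * deriv w x * deriv (deriv w) x) = 0 := by
        rw [hode x (Ico_subset_Icc_self hx)]; ring
      exact (hz ▸ (hh x)).hasDerivWithinAt
  intro t ht
  have h1 := hcz t ht
  have h00 : h 0 = 0 := by simp [hdef, h0, h0']
  rw [h00] at h1
  simp only [hdef] at h1
  nlinarith [sq_nonneg (w t), sq_nonneg (deriv w t)]

lemma uniq : ∀ u v : ℝ → ℝ, ContDiff ℝ 2 u → ContDiff ℝ 2 v →
    (∀ t ∈ Icc (0 : ℝ) 1, deriv (deriv u) t + 60 * u t = t * (1 - t)) →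
    (∀ t ∈ Icc (0 : ℝ) 1, deriv (deriv v) t + 60 * v t = t * (1 - t)) →
    u 0 = 0 → u 1 = 0 → v 0 = 0 → v 1 = 0 →
    ∀ t ∈ Icc (0 : ℝ) 1, u t = v t := by
  intro u v hu hv hou hov hu0 hu1 hv0 hv1
  have hu2 : ContDiff ℝ ((1:ℕ) + 1) u := by exact_mod_cast hu
  have hv2 : ContDiff ℝ ((1:ℕ) + 1) v := by exact_mod_cast hv
  have hud : Differentiable ℝ u := hu.differentiable (by norm_num)
  have hvd : Differentiable ℝ v := hv.differentiable (by norm_num)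
  have hu1' : ContDiff ℝ 1 (deriv u) := by exact_mod_cast (contDiff_succ_iff_deriv.mp hu2).2.2
  have hv1' : ContDiff ℝ 1 (deriv v) := by exact_mod_cast (contDiff_succ_iff_deriv.mp hv2).2.2
  have hud' : Differentiable ℝ (deriv u) := hu1'.differentiable one_ne_zero
  have hvd' : Differentiable ℝ (deriv v) := hv1'.differentiable one_ne_zero
  set c : ℝ := deriv u 0 - deriv v 0 with hc
  set g : ℝ → ℝ := fun t => u t - v t - (c/om) * Real.sin (om * t) with hgdef
  have hg : ContDiff ℝ 2 g :=
    (hu.sub hv).sub ((Real.contDiff_sin.comp (contDiff_id.const_smul om)).const_smul (c/om))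
  have hg1 : ∀ t, HasDerivAt g (deriv u t - deriv v t - c * Real.cos (om*t)) t := by
    intro t
    have := (((hud t).hasDerivAt).sub ((hvd t).hasDerivAt)).sub ((hd_sin om t).const_mul (c/om))
    have ho : om ≠ 0 := ne_of_gt om_pos
    exact this.congr_deriv (by rw [← mul_assoc, div_mul_cancel₀ c ho])
  have derivg : deriv g = fun t => deriv u t - deriv v t - c * Real.cos (om*t) :=
    funext fun t => (hg1 t).deriv
  have hg2 : ∀ t, HasDerivAt (deriv g)
      (deriv (deriv u) t - deriv (deriv v) t + c * (om * Real.sin (om*t))) t := by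
    rw [derivg]; intro t
    have := (((hud' t).hasDerivAt).sub ((hvd' t).hasDerivAt)).sub ((hd_cos om t).const_mul c)
    exact this.congr_deriv (by ring)
  have hode : ∀ t ∈ Icc (0:ℝ) 1, deriv (deriv g) t = -60 * g t := by
    intro t ht
    rw [(hg2 t).deriv]
    have h1 := hou t ht
    have h2 := hov t ht
    have ho : om ≠ 0 := ne_of_gt om_pos
    have h60 : c * (om * Real.sin (om*t)) = 60 * ((c/om) * Real.sin (om*t)) := by
      field_simp
      linear_combination c * Real.sin (om*t) * om_sq
    rw [h60, hgdef]
    linarith [h1, h2]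
  have hg0 : g 0 = 0 := by simp [hgdef, hu0, hv0]
  have hg0' : deriv g 0 = 0 := by rw [derivg]; simp [hc]
  have hgz := zero_of_ode g hg hode hg0 hg0'
  have hc0 : c = 0 := by
    have h1 := hgz 1 (by norm_num)
    rw [hgdef] at h1
    simp only [hu1, hv1, mul_one] at h1
    have hs : Real.sin om ≠ 0 := ne_of_gt sin_om_pos
    have ho : om ≠ 0 := ne_of_gt om_pos
    field_simp at h1
    have h1' : c * Real.sin om = 0 := by linarith
    exact (mul_eq_zero.mp h1').resolve_right hs
  intro t ht
  have := hgz t ht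
  rw [hgdef] at this
  simp only [hc0] at this
  simp at this
  linarith

lemma U'_pos : ∀ t ∈ Icc (0:ℝ) (1/4 : ℝ), 0 < U' t := by
  intro t ht
  have h2 := om_pos
  have h1 := om_ub
  have hπ : π < 3.15 := Real.pi_lt_d2
  have hπ0 : 0 < π := Real.pi_pos
  have harg : om * t ≤ π := by nlinarith [ht.1, ht.2]
  have hsin : 0 ≤ Real.sin (om * t) :=
    Real.sin_nonneg_of_nonneg_of_le_pi (by nlinarith [ht.1]) harg
  have hcos : Real.cos (om*t) ≤ 1 := Real.cos_le_one _
  have hk := kk_le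
  have hk0 := kk_nonneg
  have hb1 : kk * (om * Real.cos (om*t)) ≤ kk * om := by
    nlinarith [mul_nonneg (mul_nonneg hk0 h2.le) (sub_nonneg.mpr hcos)]
  have hb2 : kk * om ≤ (1/1200) * (5 * 3.15 / 2) := by nlinarith
  have hb3 : 0 ≤ om * Real.sin (om*t) / 1800 := by positivity
  unfold U'
  have := ht.2
  nlinarith

lemma U_pos_low : ∀ t ∈ Icc (0:ℝ) 1, 0 < t → t ≤ 3/4 → 0 < U t := by
  intro t ht h0 h34
  rcases le_or_gt t (1/4) with hle | hgt
  · have hmono : StrictMonoOn U (Icc (0:ℝ) (1/4)) := by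
      apply strictMonoOn_of_deriv_pos (convex_Icc _ _) contU.continuous.continuousOn
      intro x hx
      rw [interior_Icc] at hx
      rw [derivU]
      exact U'_pos x ⟨hx.1.le, hx.2.le⟩
    have := hmono (by constructor <;> norm_num) ⟨h0.le, hle⟩ h0
    rwa [U0] at this
  · have hcos : Real.cos (om*t) ≤ 1 := Real.cos_le_one _
    have hsin : Real.sin (om*t) ≤ 1 := Real.sin_le_one _
    have hk := kk_le
    have hk0 := kk_nonneg
    have hq : (3:ℝ)/16 ≤ t - t^2 := by nlinarith
    unfold U
    nlinarith

lemma U_symm : ∀ t ∈ Icc (0:ℝ) 1, U t = U (1 - t) := by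
  have hV1 : ∀ t : ℝ, HasDerivAt (fun s => U (1 - s)) (-(U' (1-t))) t := by
    intro t
    have := (hUd (1-t)).comp t ((hasDerivAt_const t (1:ℝ)).sub (hasDerivAt_id t))
    exact this.congr_deriv (by ring)
  have derivV : deriv (fun s => U (1 - s)) = fun t => -(U' (1-t)) :=
    funext fun t => (hV1 t).deriv
  have hV2 : ∀ t : ℝ, HasDerivAt (deriv (fun s => U (1 - s))) (U'' (1-t)) t := by
    rw [derivV]; intro t
    have := ((hUd' (1-t)).comp t ((hasDerivAt_const t (1:ℝ)).sub (hasDerivAt_id t))).neg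
    exact this.congr_deriv (by ring)
  have hVc : ContDiff ℝ 2 (fun s => U (1 - s)) :=
    contU.comp (contDiff_const.sub contDiff_id)
  have hVode : ∀ t ∈ Icc (0:ℝ) 1,
      deriv (deriv (fun s => U (1 - s))) t + 60 * U (1 - t) = t * (1 - t) := by
    intro t ht
    rw [(hV2 t).deriv]
    have h1t : 1 - t ∈ Icc (0:ℝ) 1 := ⟨by linarith [ht.2], by linarith [ht.1]⟩
    have := U_ode (1-t) h1t
    rw [derivU, derivU'] at this
    linarith [this]
  exact uniq U (fun s => U (1 - s)) contU hVc U_ode hVode U0 U1 (by simpa using U1) (by simpa using U0)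

lemma U_pos : ∀ t ∈ Ioo (0:ℝ) 1, 0 < U t := by
  intro t ht
  rcases le_or_gt t (3/4) with h | h
  · exact U_pos_low t ⟨ht.1.le, ht.2.le⟩ ht.1 h
  · have hs := U_symm t ⟨ht.1.le, ht.2.le⟩
    rw [hs]
    exact U_pos_low (1-t) ⟨by linarith [ht.2], by linarith [ht.1]⟩ (by linarith [ht.2]) (by linarith)

theorem dirichlet_example_positive_solution :
    (∀ u : ℝ → ℝ, ContDiff ℝ 2 u →
      (∀ t ∈ Icc (0 : ℝ) 1, deriv (deriv u) t + 60 * u t = t * (1 - t)) →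
      u 0 = 0 → u 1 = 0 → ∀ t ∈ Ioo (0 : ℝ) 1, 0 < u t) ∧
    (∃ u : ℝ → ℝ, ContDiff ℝ 2 u ∧
      (∀ t ∈ Icc (0 : ℝ) 1, deriv (deriv u) t + 60 * u t = t * (1 - t)) ∧
      u 0 = 0 ∧ u 1 = 0) ∧
    (∀ u v : ℝ → ℝ, ContDiff ℝ 2 u → ContDiff ℝ 2 v →
      (∀ t ∈ Icc (0 : ℝ) 1, deriv (deriv u) t + 60 * u t = t * (1 - t)) →
      (∀ t ∈ Icc (0 : ℝ) 1, deriv (deriv v) t + 60 * v t = t * (1 - t)) →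
      u 0 = 0 → u 1 = 0 → v 0 = 0 → v 1 = 0 →
      ∀ t ∈ Icc (0 : ℝ) 1, u t = v t) := by
  refine ⟨?_, ⟨U, contU, U_ode, U0, U1⟩, uniq⟩
  intro u hu hode hu0 hu1 t ht
  have := uniq u U hu contU hode U_ode hu0 hu1 U0 U1 t ⟨ht.1.le, ht.2.le⟩
  rw [this]
  exact U_pos t ht
end
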